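/- arXiv:1209.3530 — 3 statements merged into one kernel-verified Lean document; each statement's English description precedes it below -/
import Mathlib

section
/- Let A be a unital algebra and let L be a two-sided ideal of A of finite codimension such that A/L is semisimple. Suppose each maximal left ideal of A containing L is finitely generated as a left ideal of A. Then L is finitely generated as a left ideal of A. -/
noncomputable section

/-- A left ideal of an algebra `A`, encoded as a `ℂ`-submodule closed under
left multiplication by arbitrary elements of `A`. -/
def IsLeftIdeal {A : Type*} [NonUnitalNonAssocSemiring A] [Module ℂ A]
    (I : Submodule ℂ A) : Prop :=
  ∀ a : A, ∀ x ∈ I, a * x ∈ I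

/-- The left ideal generated by a set `S` (equivalently `⟨S⟩ = A♯·S`). -/
def leftIdealGen {A : Type*} [NonUnitalNonAssocSemiring A] [Module ℂ A]
    (S : Set A) : Submodule ℂ A :=
  sInf {I : Submodule ℂ A | IsLeftIdeal I ∧ S ⊆ ↑I}

/-- A left ideal is finitely generated if it is generated by a finite subset of itself. -/
def IsFGLeftIdeal {A : Type*} [NonUnitalNonAssocSemiring A] [Module ℂ A]
    (I : Submodule ℂ A) : Prop :=
  ∃ S : Finset A, ↑S ⊆ (I : Set A) ∧ leftIdealGen (↑S : Set A) = I

/-- A left ideal is countably generated if it is generated by a countable subset of itself. -/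
def IsCGLeftIdeal {A : Type*} [NonUnitalNonAssocSemiring A] [Module ℂ A]
    (I : Submodule ℂ A) : Prop :=
  ∃ S : Set A, S.Countable ∧ S ⊆ (I : Set A) ∧ leftIdealGen S = I

/-- Membership in `𝔐∞(A)`: a maximal element of the family of
non-finitely-generated left ideals. -/
def IsMaxNonFG {A : Type*} [NonUnitalNonAssocSemiring A] [Module ℂ A]
    (M : Submodule ℂ A) : Prop :=
  IsLeftIdeal M ∧ ¬ IsFGLeftIdeal M ∧
    ∀ J : Submodule ℂ A, IsLeftIdeal J → ¬ IsFGLeftIdeal J → M ≤ J → J = M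

/-- Membership in `𝔑∞(A)`: a maximal element of the family of
non-countably-generated left ideals. -/
def IsMaxNonCG {A : Type*} [NonUnitalNonAssocSemiring A] [Module ℂ A]
    (M : Submodule ℂ A) : Prop :=
  IsLeftIdeal M ∧ ¬ IsCGLeftIdeal M ∧
    ∀ J : Submodule ℂ A, IsLeftIdeal J → ¬ IsCGLeftIdeal J → M ≤ J → J = M

/-- `M` is a maximal left ideal. -/
def IsMaxLeftIdeal {A : Type*} [NonUnitalNonAssocSemiring A] [Module ℂ A]
    (M : Submodule ℂ A) : Prop :=
  IsLeftIdeal M ∧ M ≠ ⊤ ∧ ∀ J : Submodule ℂ A, IsLeftIdeal J → M < J → J = ⊤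

section Aux

variable {A : Type*} [Ring A] [Algebra ℂ A]

lemma isLeftIdeal_gen (S : Set A) : IsLeftIdeal (leftIdealGen S) := by
  intro a x hx
  rw [leftIdealGen, Submodule.mem_sInf] at hx ⊢
  intro I hI
  exact hI.1 a x (hx I hI)

lemma subset_gen (S : Set A) : S ⊆ ↑(leftIdealGen S) := by
  intro x hx
  rw [SetLike.mem_coe, leftIdealGen, Submodule.mem_sInf]
  exact fun I hI => hI.2 hx

lemma gen_le {S : Set A} {I : Submodule ℂ A} (hI : IsLeftIdeal I) (hS : S ⊆ ↑I) :
    leftIdealGen S ≤ I :=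
  sInf_le ⟨hI, hS⟩

lemma gen_mono {S T : Set A} (h : S ⊆ T) : leftIdealGen S ≤ leftIdealGen T :=
  gen_le (isLeftIdeal_gen T) (h.trans (subset_gen T))

lemma isFG_top : IsFGLeftIdeal (⊤ : Submodule ℂ A) := by
  refine ⟨{1}, by simp, le_antisymm le_top ?_⟩
  intro x _
  rw [leftIdealGen, Submodule.mem_sInf]
  intro I hI
  have h1 : (1 : A) ∈ I := hI.2 (by simp)
  simpa using hI.1 x 1 h1

lemma mul_right_mem_gen {S : Set A} {x : A} (q : A) (hx : x ∈ leftIdealGen S) :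
    x * q ∈ leftIdealGen ((· * q) '' S) := by
  have hle : leftIdealGen S ≤
      Submodule.comap (LinearMap.mulRight ℂ q) (leftIdealGen ((· * q) '' S)) := by
    apply gen_le
    · intro a y hy
      simp only [Submodule.mem_comap, LinearMap.mulRight_apply] at hy ⊢
      rw [mul_assoc]
      exact isLeftIdeal_gen _ a (y * q) hy
    · intro s hs
      simp only [Set.mem_preimage, SetLike.mem_coe, Submodule.mem_comap,
        LinearMap.mulRight_apply]
      exact subset_gen _ ⟨s, hs, rfl⟩
  exact hle hx

lemma isFG_inf {I J : Submodule ℂ A} (hI : IsLeftIdeal I) (hJ : IsLeftIdeal J)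
    (hIfg : IsFGLeftIdeal I) (hJfg : IsFGLeftIdeal J)
    {p q : A} (hp : p ∈ I) (hq : q ∈ J) (hpq : p + q = 1) :
    IsFGLeftIdeal (I ⊓ J) := by
  classical
  obtain ⟨SI, hSI, hgenI⟩ := hIfg
  obtain ⟨SJ, hSJ, hgenJ⟩ := hJfg
  have hIJ : IsLeftIdeal (I ⊓ J) := fun a x hx =>
    ⟨hI a x (Submodule.mem_inf.1 hx).1, hJ a x (Submodule.mem_inf.1 hx).2⟩
  have hsub : ↑(SI.image (· * q) ∪ SJ.image (· * p)) ⊆ ((I ⊓ J : Submodule ℂ A) : Set A) := by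
    intro x hx
    simp only [Finset.coe_union, Finset.coe_image, Set.mem_union, Set.mem_image,
      Finset.mem_coe] at hx
    rcases hx with ⟨g, hg, rfl⟩ | ⟨h, hh, rfl⟩
    · have hgI : g ∈ I := hSI hg
      refine SetLike.mem_coe.2 (Submodule.mem_inf.2 ⟨?_, hJ g q hq⟩)
      have : g * q = g - g * p := by
        rw [eq_sub_iff_add_eq, ← mul_add, add_comm q p, hpq, mul_one]
      rw [this]
      exact sub_mem hgI (hI g p hp)
    · have hhJ : h ∈ J := hSJ hh
      refine SetLike.mem_coe.2 (Submodule.mem_inf.2 ⟨hI h p hp, ?_⟩)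
      have : h * p = h - h * q := by
        rw [eq_sub_iff_add_eq, ← mul_add, hpq, mul_one]
      rw [this]
      exact sub_mem hhJ (hJ h q hq)
  refine ⟨SI.image (· * q) ∪ SJ.image (· * p), hsub, le_antisymm (gen_le hIJ hsub) ?_⟩
  intro x hx
  obtain ⟨hxI, hxJ⟩ := Submodule.mem_inf.1 hx
  rw [← hgenI] at hxI
  rw [← hgenJ] at hxJ
  have hx1 : x * q ∈ leftIdealGen ((· * q) '' ↑SI) := mul_right_mem_gen q hxI
  have hx2 : x * p ∈ leftIdealGen ((· * p) '' ↑SJ) := mul_right_mem_gen p hxJ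
  have hs1 : ((· * q) '' ↑SI : Set A) ⊆ ↑(SI.image (· * q) ∪ SJ.image (· * p)) := by
    rw [Finset.coe_union, Finset.coe_image, Finset.coe_image]
    exact Set.subset_union_left
  have hs2 : ((· * p) '' ↑SJ : Set A) ⊆ ↑(SI.image (· * q) ∪ SJ.image (· * p)) := by
    rw [Finset.coe_union, Finset.coe_image, Finset.coe_image]
    exact Set.subset_union_right
  have hxeq : x = x * q + x * p := by
    rw [← mul_add, add_comm q p, hpq, mul_one]
  rw [hxeq]
  exact add_mem (gen_mono hs1 hx1) (gen_mono hs2 hx2)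

end Aux

section Mat

variable {k : ℕ} {n : Fin k → ℕ}

abbrev BMat (k : ℕ) (n : Fin k → ℕ) := (i : Fin k) → Matrix (Fin (n i)) (Fin (n i)) ℂ

def Pidem (t : Σ i : Fin k, Fin (n i)) : BMat k n :=
  Pi.single t.1 (Matrix.single t.2 t.2 1)

lemma Pidem_mul_self (t : Σ i : Fin k, Fin (n i)) :
    (Pidem t : BMat k n) * Pidem t = Pidem t := by
  unfold Pidem
  rw [← Pi.single_mul, Matrix.single_mul_single_same, mul_one]

lemma Pidem_mul_ne {t u : Σ i : Fin k, Fin (n i)} (h : t ≠ u) :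
    (Pidem t : BMat k n) * Pidem u = 0 := by
  obtain ⟨i, j⟩ := t
  obtain ⟨i', j'⟩ := u
  funext m
  simp only [Pidem, Pi.mul_apply, Pi.zero_apply]
  rcases eq_or_ne i i' with rfl | hi
  · have hj : j ≠ j' := fun hjj => h (by rw [hjj])
    rcases eq_or_ne m i with rfl | hm
    · rw [Pi.single_eq_same, Pi.single_eq_same, Matrix.single_mul_single_of_ne (h := hj)]
    · rw [Pi.single_eq_of_ne hm, zero_mul]
  · rcases eq_or_ne m i with rfl | hm
    · rw [Pi.single_eq_of_ne hi, mul_zero]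
    · rw [Pi.single_eq_of_ne hm, zero_mul]

lemma diag_sum (N : ℕ) : ∑ j : Fin N, Matrix.single j j (1 : ℂ) = 1 := by
  ext a b
  simp only [Matrix.sum_apply, Matrix.single, Matrix.one_apply, Matrix.of_apply]
  rcases eq_or_ne a b with rfl | h
  · simp
  · rw [if_neg h, Finset.sum_eq_zero]
    intro j _
    rcases eq_or_ne j a with rfl | hj
    · simp [h]
    · simp [hj]

lemma Pidem_sum : ∑ t : Σ i : Fin k, Fin (n i), (Pidem t : BMat k n) = 1 := by
  rw [← Finset.univ_sigma_univ, Finset.sum_sigma]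
  calc ∑ i : Fin k, ∑ j : Fin (n i), (Pidem ⟨i, j⟩ : BMat k n)
      = ∑ i : Fin k, Pi.single i (1 : Matrix (Fin (n i)) (Fin (n i)) ℂ) := by
        refine Finset.sum_congr rfl fun i _ => ?_
        funext m
        rcases eq_or_ne m i with rfl | hm
        · simp only [Pidem, Finset.sum_apply, Pi.single_eq_same]
          exact diag_sum (n m)
        · simp only [Pidem, Finset.sum_apply, Pi.single_eq_of_ne hm]
          simp
    _ = 1 := by
        have := Finset.univ_sum_single (1 : BMat k n)
        simpa using this

lemma Pidem_ne_zero (t : Σ i : Fin k, Fin (n i)) : (Pidem t : BMat k n) ≠ 0 := by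
  intro h
  have h1 := congrFun h t.1
  rw [Pidem, Pi.single_eq_same, Pi.zero_apply] at h1
  have h2 := congrFun (congrFun h1 t.2) t.2
  rw [Matrix.single_apply_same, Matrix.zero_apply] at h2
  exact one_ne_zero h2

lemma exists_left_inv {t : Σ i : Fin k, Fin (n i)} {b : BMat k n}
    (hb : b * Pidem t ≠ 0) : ∃ c : BMat k n, c * (b * Pidem t) = Pidem t := by
  obtain ⟨i, j⟩ := t
  have h1 : ∃ m : Fin (n i), b i m j ≠ 0 := by
    by_contra hcon
    push_neg at hcon
    apply hb
    funext m'
    simp only [Pi.mul_apply, Pi.zero_apply, Pidem]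
    rcases eq_or_ne m' i with rfl | hm
    · rw [Pi.single_eq_same]
      ext a c
      rcases eq_or_ne c j with rfl | hc
      · rw [Matrix.mul_single_apply_same, hcon a, zero_mul, Matrix.zero_apply]
      · rw [Matrix.mul_single_apply_of_ne _ _ _ _ _ hc, Matrix.zero_apply]
    · rw [Pi.single_eq_of_ne hm, mul_zero]
  obtain ⟨m, hmne⟩ := h1
  refine ⟨Pi.single i ((b i m j)⁻¹ • Matrix.single j m 1), ?_⟩
  funext m'
  simp only [Pi.mul_apply, Pidem]
  rcases eq_or_ne m' i with rfl | hm
  · rw [Pi.single_eq_same, Pi.single_eq_same]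
    rw [Matrix.smul_single, smul_eq_mul, mul_one]
    ext a c
    rcases eq_or_ne a j with ha | ha
    · rw [ha, Matrix.single_mul_apply_same]
      rcases eq_or_ne c j with hc | hc
      · rw [hc, Matrix.mul_single_apply_same, Matrix.single_apply_same,
          mul_one, inv_mul_cancel₀ hmne]
      · rw [Matrix.mul_single_apply_of_ne _ _ _ _ _ hc, mul_zero,
          Matrix.single, Matrix.of_apply, if_neg (by tauto)]
    · rw [Matrix.single_mul_apply_of_ne _ _ _ _ _ ha,
        Matrix.single, Matrix.of_apply, if_neg (by tauto)]
  · rw [Pi.single_eq_of_ne hm, Pi.single_eq_of_ne hm, zero_mul]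

end Mat

/-- Lemma 1.9. Let `A` be a unital algebra and `L` a two-sided ideal
of finite codimension with `A/L` semisimple, i.e. (by Wedderburn's theorem)
`A/L ≅ Mₙ₁(ℂ) ⊕ ⋯ ⊕ Mₙₖ(ℂ)`, encoded by a surjective algebra homomorphism onto a finite
product of matrix algebras with kernel `L`. If every maximal left ideal of `A`
containing `L` is finitely generated, then `L` is finitely generated as a left ideal. -/
theorem fg_of_semisimple_quotient {A : Type*} [Ring A] [Algebra ℂ A]
    (L : Submodule ℂ A) (k : ℕ) (n : Fin k → ℕ) (hn : ∀ i, 0 < n i)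
    (π : A →ₐ[ℂ] ((i : Fin k) → Matrix (Fin (n i)) (Fin (n i)) ℂ))
    (hsurj : Function.Surjective π)
    (hker : ∀ a : A, π a = 0 ↔ a ∈ L)
    (hmax : ∀ M : Submodule ℂ A, IsMaxLeftIdeal M → L ≤ M → IsFGLeftIdeal M) :
    IsFGLeftIdeal L := by
  classical
  -- the maximal left ideals K t = {a | π a * Pidem t = 0}
  let K : (Σ i : Fin k, Fin (n i)) → Submodule ℂ A := fun t =>
    LinearMap.ker ((LinearMap.mulRight ℂ (Pidem t)).comp π.toLinearMap)
  have hKmem : ∀ t (a : A), a ∈ K t ↔ π a * Pidem t = 0 := by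
    intro t a
    simp [K, LinearMap.mem_ker]
  have hKleft : ∀ t, IsLeftIdeal (K t) := by
    intro t a x hx
    rw [hKmem] at hx ⊢
    rw [map_mul, mul_assoc, hx, mul_zero]
  have hLK : ∀ t, L ≤ K t := by
    intro t a ha
    rw [hKmem, (hker a).2 ha, zero_mul]
  have hKmax : ∀ t, IsMaxLeftIdeal (K t) := by
    intro t
    refine ⟨hKleft t, ?_, ?_⟩
    · intro htop
      have h1 : (1 : A) ∈ K t := htop ▸ Submodule.mem_top
      rw [hKmem, map_one, one_mul] at h1
      exact Pidem_ne_zero t h1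
    · intro J hJ hlt
      obtain ⟨x, hxJ, hxK⟩ := SetLike.exists_of_lt hlt
      rw [hKmem] at hxK
      obtain ⟨c, hc⟩ := exists_left_inv hxK
      obtain ⟨c', rfl⟩ := hsurj c
      have h1 : c' * x - 1 ∈ K t := by
        rw [hKmem, map_sub, map_mul, map_one, sub_mul, one_mul, mul_assoc, hc, sub_self]
      have h2 : c' * x ∈ J := hJ c' x hxJ
      have h3 : (1 : A) ∈ J := by
        have := sub_mem h2 (hlt.le h1)
        simpa using this
      rw [eq_top_iff]
      intro a _
      simpa using hJ a 1 h3
  have hKfg : ∀ t, IsFGLeftIdeal (K t) := fun t => hmax _ (hKmax t) (hLK t)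
  -- induction over finite sets of indices
  have main : ∀ S : Finset (Σ i : Fin k, Fin (n i)),
      IsLeftIdeal (⨅ t ∈ S, K t) ∧ IsFGLeftIdeal (⨅ t ∈ S, K t) := by
    intro S
    induction S using Finset.induction_on with
    | empty =>
      constructor
      · simp only [Finset.notMem_empty, iInf_false, iInf_top]
        intro a x _
        exact Submodule.mem_top
      · simp only [Finset.notMem_empty, iInf_false, iInf_top]
        exact isFG_top
    | @insert u S huS ih =>
      rw [Finset.iInf_insert]
      have hleft : IsLeftIdeal (K u ⊓ ⨅ t ∈ S, K t) := by
        intro a x hx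
        obtain ⟨hx1, hx2⟩ := Submodule.mem_inf.1 hx
        exact Submodule.mem_inf.2 ⟨hKleft u a x hx1, ih.1 a x hx2⟩
      refine ⟨hleft, ?_⟩
      rw [inf_comm]
      -- comaximality witnesses
      obtain ⟨b, hb⟩ := hsurj (Pidem u)
      have hpI : b ∈ ⨅ t ∈ S, K t := by
        rw [Submodule.mem_iInf]
        intro t
        rw [Submodule.mem_iInf]
        intro htS
        rw [hKmem, hb]
        exact Pidem_mul_ne (fun h => huS (h ▸ htS))
      have hqJ : 1 - b ∈ K u := by
        rw [hKmem, map_sub, map_one, hb, sub_mul, one_mul, Pidem_mul_self, sub_self]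
      exact isFG_inf ih.1 (hKleft u) ih.2 (hKfg u) hpI hqJ (by abel)
  -- L is the intersection of all the K t
  have hL : (⨅ t ∈ (Finset.univ : Finset (Σ i : Fin k, Fin (n i))), K t) = L := by
    apply le_antisymm
    · intro a ha
      rw [Submodule.mem_iInf] at ha
      have hpa : ∀ t, π a * Pidem t = 0 := by
        intro t
        have := ha t
        rw [Submodule.mem_iInf] at this
        exact (hKmem t a).1 (this (Finset.mem_univ t))
      have : π a = 0 := by
        have h1 : π a * (∑ t : Σ i : Fin k, Fin (n i), (Pidem t :
            (i : Fin k) → Matrix (Fin (n i)) (Fin (n i)) ℂ)) = π a := by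
          rw [Pidem_sum, mul_one]
        rw [Finset.mul_sum] at h1
        rw [← h1, Finset.sum_eq_zero fun t _ => hpa t]
      exact (hker a).1 this
    · intro a ha
      rw [Submodule.mem_iInf]
      intro t
      rw [Submodule.mem_iInf]
      intro _
      exact hLK t ha
  rw [← hL]
  exact (main Finset.univ).2
end
end

section
/- Let A be an algebra and let I be a left ideal of A such that there exist a, b ∈ A \ I with ba ∈ I and Ia ⊆ I. Then I is not maximal among the left ideals of A that are not finitely generated. -/
noncomputable section

section Aux
variable {A : Type*} [NonUnitalRing A] [Module ℂ A] [IsScalarTower ℂ A A] [SMulCommClass ℂ A A]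

/-- Explicit description of the left ideal generated by `S`. -/
def lid (S : Set A) : Submodule ℂ A :=
  Submodule.span ℂ (S ∪ {z | ∃ c s, s ∈ S ∧ z = c * s})

lemma lid_isLeftIdeal (S : Set A) : IsLeftIdeal (lid S) := by
  intro c x hx
  induction hx using Submodule.span_induction with
  | mem y hy =>
    apply Submodule.subset_span
    rcases hy with hy | ⟨d, s, hs, rfl⟩
    · exact Or.inr ⟨c, y, hy, rfl⟩
    · exact Or.inr ⟨c * d, s, hs, (mul_assoc c d s).symm⟩
  | zero => simpa using (lid S).zero_mem
  | add y z _ _ hy hz => simpa [mul_add] using (lid S).add_mem hy hz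
  | smul r y _ hy => simpa [mul_smul_comm] using (lid S).smul_mem r hy

lemma subset_lid (S : Set A) : S ⊆ lid S := fun _ hs => Submodule.subset_span (Or.inl hs)

lemma lid_le {S : Set A} {J : Submodule ℂ A} (hJ : IsLeftIdeal J) (hS : S ⊆ J) :
    lid S ≤ J := by
  apply Submodule.span_le.2
  rintro z (hz | ⟨c, s, hs, rfl⟩)
  · exact hS hz
  · exact hJ c s (hS hs)

lemma lid_mono {S T : Set A} (h : S ⊆ T) : lid S ≤ lid T :=
  lid_le (lid_isLeftIdeal T) (h.trans (subset_lid T))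

lemma leftIdealGen_eq (S : Set A) : leftIdealGen S = lid S := by
  apply le_antisymm
  · exact sInf_le ⟨lid_isLeftIdeal S, subset_lid S⟩
  · exact le_sInf fun J ⟨hJ, hS⟩ => lid_le hJ hS

lemma isLeftIdeal_sup {P Q : Submodule ℂ A} (hP : IsLeftIdeal P) (hQ : IsLeftIdeal Q) :
    IsLeftIdeal (P ⊔ Q) := by
  intro c x hx
  rcases Submodule.mem_sup.1 hx with ⟨y, hy, z, hz, rfl⟩
  rw [mul_add]
  exact Submodule.add_mem_sup (hP c y hy) (hQ c z hz)

end Aux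

/-- Theorem 2.3. Let `A` be an algebra and `I` a left ideal such
that there exist `a, b ∈ A \ I` with `ba ∈ I` and `Ia ⊆ I`. Then `I` is not maximal
among the non-finitely-generated left ideals of `A`. -/
theorem not_maxNonFG_of_exists {A : Type*} [NonUnitalRing A] [Module ℂ A]
    [IsScalarTower ℂ A A] [SMulCommClass ℂ A A]
    (I : Submodule ℂ A) (hI : IsLeftIdeal I)
    (a b : A) (ha : a ∉ I) (hb : b ∉ I) (hba : b * a ∈ I)
    (hIa : ∀ x ∈ I, x * a ∈ I) :
    ¬ IsMaxNonFG I := by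
  classical
  rintro ⟨hL, hnFG, hmax⟩
  -- the left ideal K = {c | c * a ∈ I}
  set K : Submodule ℂ A :=
    { carrier := {c : A | c * a ∈ I}
      add_mem' := fun {x y} hx hy => by
        simpa [add_mul] using I.add_mem hx hy
      zero_mem' := by simpa using I.zero_mem
      smul_mem' := fun r x hx => by
        simpa [smul_mul_assoc] using I.smul_mem r hx } with hKdef
  have hKmem : ∀ c : A, c ∈ K ↔ c * a ∈ I := fun c => Iff.rfl
  have hKleft : IsLeftIdeal K := by
    intro c x hx
    show (c * x) * a ∈ I
    rw [mul_assoc]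
    exact hL c _ hx
  have hIK : I ≤ K := fun x hx => hIa x hx
  have hbK : b ∈ K := hba
  -- K is finitely generated
  have hKfg : ¬ IsFGLeftIdeal K → False := by
    intro h
    have := hmax K hKleft h hIK
    exact hb (this ▸ hbK)
  by_cases hKfg' : IsFGLeftIdeal K
  swap
  · exact hKfg hKfg'
  obtain ⟨S₂, hS₂I, hS₂⟩ := hKfg'
  rw [leftIdealGen_eq] at hS₂
  -- the left ideal J₁ = I + ℂa + Aa
  set J₁ : Submodule ℂ A := I ⊔ lid ({a} : Set A) with hJ₁def
  have hJ₁left : IsLeftIdeal J₁ := isLeftIdeal_sup hL (lid_isLeftIdeal _)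
  have haJ₁ : a ∈ J₁ := Submodule.mem_sup_right (subset_lid ({a} : Set A) rfl)
  have hIJ₁ : I ≤ J₁ := le_sup_left
  have hJ₁fg : IsFGLeftIdeal J₁ := by
    by_contra h
    exact ha ((hmax J₁ hJ₁left h hIJ₁) ▸ haJ₁)
  obtain ⟨S₁, hS₁J, hS₁⟩ := hJ₁fg
  rw [leftIdealGen_eq] at hS₁
  -- decomposition of elements of lid {a}
  have hlida : ∀ z ∈ lid ({a} : Set A), ∃ (l : ℂ) (c : A), z = l • a + c * a := by
    intro z hz
    induction hz using Submodule.span_induction with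
    | mem y hy =>
      rcases hy with hy | ⟨c, s, hs, rfl⟩
      · rcases hy with rfl
        exact ⟨1, 0, by simp⟩
      · rcases hs with rfl
        exact ⟨0, c, by simp⟩
    | zero => exact ⟨0, 0, by simp⟩
    | add y z _ _ hy hz =>
      obtain ⟨l₁, c₁, rfl⟩ := hy
      obtain ⟨l₂, c₂, rfl⟩ := hz
      exact ⟨l₁ + l₂, c₁ + c₂, by rw [add_smul, add_mul]; abel⟩
    | smul r y _ hy =>
      obtain ⟨l, c, rfl⟩ := hy
      exact ⟨r * l, r • c, by rw [smul_add, smul_smul, smul_mul_assoc]⟩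
  -- decompose the generators of J₁
  have hdec : ∀ s ∈ (S₁ : Set A), ∃ (x : A) (l : ℂ) (c : A),
      x ∈ I ∧ s = x + (l • a + c * a) := by
    intro s hs
    rcases Submodule.mem_sup.1 (hS₁J hs) with ⟨x, hx, z, hz, rfl⟩
    obtain ⟨l, c, rfl⟩ := hlida z hz
    exact ⟨x, l, c, hx, rfl⟩
  choose! xf lf cf hxfI hsf using hdec
  set X : Finset A := S₁.image xf with hXdef
  have hXI : (X : Set A) ⊆ (I : Set A) := by
    intro x hx
    simp only [hXdef, Finset.coe_image, Set.mem_image, Finset.mem_coe] at hx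
    obtain ⟨s, hs, rfl⟩ := hx
    exact hxfI s (by exact_mod_cast hs)
  have hlidXI : lid (X : Set A) ≤ I := lid_le hL hXI
  -- key decomposition lemma for J₁
  have keyJ : ∀ y ∈ J₁, ∃ (x : A) (l : ℂ) (c : A),
      x ∈ lid (X : Set A) ∧ y = x + (l • a + c * a) := by
    intro y hy
    rw [← hS₁] at hy
    induction hy using Submodule.span_induction with
    | mem g hg =>
      rcases hg with hg | ⟨d, s, hs, rfl⟩
      · refine ⟨xf g, lf g, cf g, ?_, hsf g hg⟩
        exact subset_lid _ (by
          simp only [hXdef, Finset.coe_image, Set.mem_image, Finset.mem_coe]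
          exact ⟨g, by exact_mod_cast hg, rfl⟩)
      · refine ⟨d * xf s, 0, (lf s) • d + d * cf s, ?_, ?_⟩
        · exact lid_isLeftIdeal _ d _ (subset_lid _ (by
            simp only [hXdef, Finset.coe_image, Set.mem_image, Finset.mem_coe]
            exact ⟨s, by exact_mod_cast hs, rfl⟩))
        · conv_lhs => rw [hsf s hs]
          rw [mul_add, mul_add, mul_smul_comm, ← mul_assoc, add_mul, smul_mul_assoc]
          simp
    | zero => exact ⟨0, 0, 0, Submodule.zero_mem _, by simp⟩
    | add y z _ _ hy hz =>
      obtain ⟨x₁, l₁, c₁, hx₁, rfl⟩ := hy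
      obtain ⟨x₂, l₂, c₂, hx₂, rfl⟩ := hz
      exact ⟨x₁ + x₂, l₁ + l₂, c₁ + c₂, Submodule.add_mem _ hx₁ hx₂,
        by rw [add_smul, add_mul]; abel⟩
    | smul r y _ hy =>
      obtain ⟨x, l, c, hx, rfl⟩ := hy
      exact ⟨r • x, r * l, r • c, Submodule.smul_mem _ r hx,
        by rw [smul_add, smul_add, smul_smul, smul_mul_assoc]⟩
  -- multiplying K by a lands in lid Y
  set Y : Finset A := S₂.image (· * a) with hYdef
  have hYI : (Y : Set A) ⊆ (I : Set A) := by
    intro y hy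
    simp only [hYdef, Finset.coe_image, Set.mem_image, Finset.mem_coe] at hy
    obtain ⟨t, ht, rfl⟩ := hy
    exact hS₂I (by exact_mod_cast ht)
  have keyK : ∀ c ∈ K, c * a ∈ lid (Y : Set A) := by
    intro c hc
    rw [← hS₂] at hc
    induction hc using Submodule.span_induction with
    | mem t ht =>
      rcases ht with ht | ⟨d, t, ht, rfl⟩
      · exact subset_lid _ (by
          simp only [hYdef, Finset.coe_image, Set.mem_image, Finset.mem_coe]
          exact ⟨t, by exact_mod_cast ht, rfl⟩)
      · rw [mul_assoc]
        refine lid_isLeftIdeal _ d _ (subset_lid _ ?_)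
        simp only [hYdef, Finset.coe_image, Set.mem_image, Finset.mem_coe]
        exact ⟨t, by exact_mod_cast ht, rfl⟩
    | zero => simpa using (lid (Y : Set A)).zero_mem
    | add y z _ _ hy hz => simpa [add_mul] using Submodule.add_mem _ hy hz
    | smul r y _ hy => simpa [smul_mul_assoc] using Submodule.smul_mem _ r hy
  -- the shared decomposition of elements of I
  have hmemI : ∀ y ∈ I, ∃ (x : A) (l : ℂ) (c : A),
      x ∈ lid (X : Set A) ∧ l • a + c * a ∈ I ∧ y = x + (l • a + c * a) := by
    intro y hy
    obtain ⟨x, l, c, hx, rfl⟩ := keyJ y (hIJ₁ hy)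
    refine ⟨x, l, c, hx, ?_, rfl⟩
    have : x ∈ I := hlidXI hx
    have := I.sub_mem hy this
    simpa using this
  by_cases hP : ∃ c : A, a + c * a ∈ I
  · -- case: the scalar part can be nonzero
    obtain ⟨c₀, he⟩ := hP
    set e : A := a + c₀ * a with hedef
    set G : Finset A := X ∪ Y ∪ {e} with hGdef
    apply hnFG
    refine ⟨G, ?_, ?_⟩
    · intro g hg
      simp only [hGdef, Finset.coe_union, Finset.coe_singleton, Set.mem_union,
        Set.mem_singleton_iff] at hg
      rcases hg with (hg | hg) | rfl
      · exact hXI hg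
      · exact hYI hg
      · exact he
    · rw [leftIdealGen_eq]
      apply le_antisymm
      · apply lid_le hL
        intro g hg
        simp only [hGdef, Finset.coe_union, Finset.coe_singleton, Set.mem_union,
          Set.mem_singleton_iff] at hg
        rcases hg with (hg | hg) | rfl
        · exact hXI hg
        · exact hYI hg
        · exact he
      · intro y hy
        obtain ⟨x, l, c, hx, hla, rfl⟩ := hmemI y hy
        have hXG : lid (X : Set A) ≤ lid (G : Set A) :=
          lid_mono (by intro z hz; simp only [hGdef]; simp only [Finset.coe_union]; left; left; exact hz)
        have hYG : lid (Y : Set A) ≤ lid (G : Set A) :=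
          lid_mono (by intro z hz; simp only [hGdef]; simp only [Finset.coe_union]; left; right; exact hz)
        have heG : e ∈ lid (G : Set A) := subset_lid _ (by
          simp only [hGdef, Finset.coe_union, Finset.coe_singleton]
          right; rfl)
        -- l • a + c * a = l • e + (c - l • c₀) * a
        have hsplit : l • a + c * a = l • e + (c - l • c₀) * a := by
          rw [hedef, smul_add, sub_mul, smul_mul_assoc]
          abel
        have hcK : (c - l • c₀) ∈ K := by
          rw [hKmem]
          have h1 : (c - l • c₀) * a = (l • a + c * a) - l • e := by
            rw [hsplit]; abel
          rw [h1]
          exact I.sub_mem hla (I.smul_mem l he)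
        rw [hsplit]
        exact Submodule.add_mem _ (hXG hx)
          (Submodule.add_mem _ (Submodule.smul_mem _ l heG) (hYG (keyK _ hcK)))
  · -- case: the scalar part is always zero
    set G : Finset A := X ∪ Y with hGdef
    apply hnFG
    refine ⟨G, ?_, ?_⟩
    · intro g hg
      simp only [hGdef, Finset.coe_union, Set.mem_union] at hg
      rcases hg with hg | hg
      · exact hXI hg
      · exact hYI hg
    · rw [leftIdealGen_eq]
      apply le_antisymm
      · apply lid_le hL
        intro g hg
        simp only [hGdef, Finset.coe_union, Set.mem_union] at hg
        rcases hg with hg | hg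
        · exact hXI hg
        · exact hYI hg
      · intro y hy
        obtain ⟨x, l, c, hx, hla, rfl⟩ := hmemI y hy
        have hl0 : l = 0 := by
          by_contra hl
          apply hP
          refine ⟨l⁻¹ • c, ?_⟩
          have := I.smul_mem l⁻¹ hla
          rwa [smul_add, smul_smul, inv_mul_cancel₀ hl, one_smul, ← smul_mul_assoc] at this
        rw [hl0, zero_smul, zero_add]
        have hcK : c ∈ K := by
          rw [hKmem]; simpa [hl0] using hla
        have hXG : lid (X : Set A) ≤ lid (G : Set A) :=
          lid_mono (by intro z hz; simp only [hGdef, Finset.coe_union]; left; exact hz)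
        have hYG : lid (Y : Set A) ≤ lid (G : Set A) :=
          lid_mono (by intro z hz; simp only [hGdef, Finset.coe_union]; right; exact hz)
        exact Submodule.add_mem _ (hXG hx) (hYG (keyK _ hcK))
end
end

section
/- In the Banach algebra c of convergent complex sequences, for each k ∈ ℕ the maximal ideal M_k = {(xᵢ) ∈ c : x_k = 0} is singly generated (by the sequence with 0 in position k and 1 elsewhere), whereas the maximal ideal c₀ of null sequences is not finitely generated. -/
noncomputable section

open Filter Topology

set_option synthInstance.maxHeartbeats 1000000
set_option maxHeartbeats 1000000

/-- The algebra `c` of convergent complex sequences, as a subalgebra of `ℕ → ℂ`. -/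
def convSeq : Subalgebra ℂ (ℕ → ℂ) where
  carrier := {f : ℕ → ℂ | ∃ l : ℂ, Tendsto f atTop (𝓝 l)}
  mul_mem' := by rintro f g ⟨l, hl⟩ ⟨m, hm⟩; exact ⟨l * m, hl.mul hm⟩
  add_mem' := by rintro f g ⟨l, hl⟩ ⟨m, hm⟩; exact ⟨l + m, hl.add hm⟩
  algebraMap_mem' := fun c => ⟨c, tendsto_const_nhds⟩

/-- The maximal ideal `M_k = {x ∈ c : x_k = 0}`. -/
def Mk (k : ℕ) : Submodule ℂ convSeq where
  carrier := {f : convSeq | (f : ℕ → ℂ) k = 0}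
  zero_mem' := rfl
  add_mem' := by intro f g hf hg; simp_all [Set.mem_setOf_eq]
  smul_mem' := by intro c f hf; simp_all [Set.mem_setOf_eq]

/-- The maximal ideal `c₀` of null sequences. -/
def nullIdeal : Submodule ℂ convSeq where
  carrier := {f : convSeq | Tendsto (f : ℕ → ℂ) atTop (𝓝 0)}
  zero_mem' := tendsto_const_nhds
  add_mem' := by
    intro f g hf hg
    have h := Tendsto.add (f := (f : ℕ → ℂ)) (g := (g : ℕ → ℂ)) hf hg
    rw [add_zero] at h
    exact h
  smul_mem' := by
    intro c f hf
    have h := Tendsto.const_smul (f := (f : ℕ → ℂ)) (M := ℂ) hf c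
    rw [smul_zero] at h
    exact h

/-- The sequence with `0` in position `k` and `1` elsewhere, as an element of `c`. -/
def genSeq (k : ℕ) : convSeq :=
  ⟨fun i => if i = k then 0 else 1, 1, by
    refine Tendsto.congr' ?_
      (tendsto_const_nhds : Tendsto (fun _ : ℕ => (1 : ℂ)) atTop (𝓝 1))
    filter_upwards [eventually_gt_atTop k] with i hi
    simp [hi.ne']⟩

lemma convSeq_bdd (a : convSeq) : ∃ B : ℝ, ∀ n, ‖(a : ℕ → ℂ) n‖ ≤ B := by
  obtain ⟨l, hl⟩ := a.2
  obtain ⟨B, hB⟩ := (hl.norm).bddAbove_range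
  exact ⟨B, fun n => hB ⟨n, rfl⟩⟩

/-- The left ideal of sequences dominated by a multiple of `m`. -/
def boundedBy (m : ℕ → ℝ) : Submodule ℂ convSeq where
  carrier := {f | ∃ C : ℝ, ∀ n, ‖(f : ℕ → ℂ) n‖ ≤ C * m n}
  zero_mem' := ⟨0, by simp⟩
  add_mem' := by
    rintro f g ⟨C, hC⟩ ⟨D, hD⟩
    refine ⟨C + D, fun n => ?_⟩
    have := norm_add_le ((f : ℕ → ℂ) n) ((g : ℕ → ℂ) n)
    have h1 := hC n; have h2 := hD n
    simp only [AddMemClass.coe_add, Pi.add_apply]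
    nlinarith
  smul_mem' := by
    rintro c f ⟨C, hC⟩
    refine ⟨‖c‖ * C, fun n => ?_⟩
    simp only [SetLike.val_smul, Pi.smul_apply, smul_eq_mul, norm_mul, mul_assoc]
    exact mul_le_mul_of_nonneg_left (hC n) (norm_nonneg c)

lemma boundedBy_mem {m : ℕ → ℝ} {f : convSeq} :
    f ∈ boundedBy m ↔ ∃ C : ℝ, ∀ n, ‖(f : ℕ → ℂ) n‖ ≤ C * m n := Iff.rfl

lemma boundedBy_isLeftIdeal (m : ℕ → ℝ) (hm : ∀ n, 0 ≤ m n) :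
    IsLeftIdeal (boundedBy m) := by
  rintro a f ⟨C, hC⟩
  obtain ⟨B, hB⟩ := convSeq_bdd a
  have hB0 : 0 ≤ B := le_trans (norm_nonneg _) (hB 0)
  refine ⟨B * C, fun n => ?_⟩
  simp only [MulMemClass.coe_mul, Pi.mul_apply, norm_mul, mul_assoc]
  exact mul_le_mul (hB n) (hC n) (norm_nonneg _) hB0

lemma leftIdealGen_le {S : Set convSeq} {I : Submodule ℂ convSeq}
    (h1 : IsLeftIdeal I) (h2 : S ⊆ ↑I) : leftIdealGen S ≤ I :=
  sInf_le ⟨h1, h2⟩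

/-- In the Banach algebra `c` of convergent complex sequences, each
maximal ideal `M_k` is singly generated (by the sequence with `0` in position `k` and
`1` elsewhere), whereas the maximal ideal `c₀` of null sequences is not finitely
generated. -/
theorem convSeq_maximal_ideals :
    (∀ k : ℕ, Mk k = leftIdealGen ({genSeq k} : Set convSeq)) ∧
      ¬ IsFGLeftIdeal nullIdeal := by
  constructor
  · intro k
    apply le_antisymm
    · -- every f with f k = 0 lies in every left ideal containing genSeq k
      intro f hf
      have hfk : (f : ℕ → ℂ) k = 0 := hf
      simp only [leftIdealGen, Submodule.mem_sInf]
      rintro I ⟨hI, hSI⟩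
      have hgen : genSeq k ∈ I := hSI rfl
      have hfe : f = f * genSeq k := by
        apply Subtype.ext
        funext i
        simp only [MulMemClass.coe_mul, Pi.mul_apply, genSeq]
        by_cases hik : i = k
        · subst hik; simp [hfk]
        · simp [hik]
      rw [hfe]
      exact hI f _ hgen
    · apply sInf_le
      refine ⟨?_, ?_⟩
      · intro a x hx
        have : (x : ℕ → ℂ) k = 0 := hx
        show ((a * x : convSeq) : ℕ → ℂ) k = 0
        simp [this]
      · intro s hs
        rcases hs with rfl
        show ((genSeq k : convSeq) : ℕ → ℂ) k = 0
        simp [genSeq]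
  · rintro ⟨S, hSsub, hSgen⟩
    -- the dominating function
    set m : ℕ → ℝ := fun n => ∑ s ∈ S, ‖(s : ℕ → ℂ) n‖ with hm_def
    have hm0 : ∀ n, 0 ≤ m n := fun n => Finset.sum_nonneg fun s _ => norm_nonneg _
    have hms : ∀ s ∈ S, ∀ n, ‖(s : ℕ → ℂ) n‖ ≤ m n := by
      intro s hs n
      simp only [hm_def]
      exact Finset.single_le_sum (f := fun s : convSeq => ‖(s : ℕ → ℂ) n‖)
        (fun t _ => norm_nonneg _) hs
    have hmt : Tendsto m atTop (𝓝 0) := by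
      have : Tendsto m atTop (𝓝 (∑ s ∈ S, (0 : ℝ))) := by
        apply tendsto_finset_sum
        intro s hs
        have := hSsub hs
        exact (this : Tendsto ((s : convSeq) : ℕ → ℂ) atTop (𝓝 0)).norm.congr'
          (by filter_upwards with n using rfl) |>.congr (fun n => rfl) |>.mono_right
          (by simp)
      simpa using this
    -- the witness null sequence
    have hgt : Tendsto (fun n : ℕ => ((Real.sqrt (m n) + 1 / (n + 1) : ℝ) : ℂ))
        atTop (𝓝 0) := by
      have h1 : Tendsto (fun n : ℕ => Real.sqrt (m n) + 1 / (n + 1)) atTop (𝓝 0) := by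
        have hs : Tendsto (fun n : ℕ => Real.sqrt (m n)) atTop (𝓝 0) := by
          simpa [Function.comp_def] using (Real.continuous_sqrt.tendsto 0).comp hmt
        simpa using hs.add tendsto_one_div_add_atTop_nhds_zero_nat
      have := (Complex.continuous_ofReal.tendsto 0).comp h1
      simpa [Function.comp_def] using this
    set g : convSeq := ⟨fun n => ((Real.sqrt (m n) + 1 / (n + 1) : ℝ) : ℂ), 0, hgt⟩
      with hg_def
    have hg_null : g ∈ nullIdeal := hgt
    have hg_norm : ∀ n, ‖(g : ℕ → ℂ) n‖ = Real.sqrt (m n) + 1 / (n + 1) := by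
      intro n
      have hpos : 0 ≤ Real.sqrt (m n) + 1 / (n + 1) := by positivity
      show ‖((Real.sqrt (m n) + 1 / (n + 1) : ℝ) : ℂ)‖ = _
      rw [Complex.norm_real, Real.norm_eq_abs, abs_of_nonneg hpos]
    -- the generated ideal is contained in boundedBy m
    have hle : leftIdealGen (↑S : Set convSeq) ≤ boundedBy m := by
      apply leftIdealGen_le (boundedBy_isLeftIdeal m hm0)
      intro s hs
      exact ⟨1, fun n => by simpa using hms s hs n⟩
    have hg_mem : g ∈ boundedBy m := hle (hSgen ▸ hg_null)
    obtain ⟨C, hC⟩ := hg_mem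
    -- derive C > 0
    have hC0 : 0 < C := by
      have h0 := hC 0
      rw [hg_norm 0] at h0
      nlinarith [Real.sqrt_nonneg (m 0), hm0 0]
    -- choose n with m n small
    obtain ⟨n, hn⟩ : ∃ n, m n < (1 / C) ^ 2 :=
      (hmt.eventually (gt_mem_nhds (by positivity))).exists
    have hbound := hC n
    rw [hg_norm n] at hbound
    have hsq : Real.sqrt (m n) * Real.sqrt (m n) = m n := Real.mul_self_sqrt (hm0 n)
    have hs_lt : Real.sqrt (m n) < 1 / C := by
      have := Real.sqrt_lt_sqrt (hm0 n) hn
      rwa [Real.sqrt_sq (by positivity : (0:ℝ) ≤ 1 / C)] at this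
    have hn1 : (0 : ℝ) < 1 / (n + 1) := by positivity
    have h1 : C * Real.sqrt (m n) < C * (1 / C) := mul_lt_mul_of_pos_left hs_lt hC0
    have h2 : C * (1 / C) = 1 := mul_one_div_cancel hC0.ne'
    nlinarith [Real.sqrt_nonneg (m n)]
end
end
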